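/- Every closed subset of a weakly nilpotent hypergroup is itself a weakly nilpotent hypergroup. -/

import Mathlib

/-- A hypergroup: a set with a hypermultiplication, identity and involution
satisfying (H1), (H2), (H3). -/
structure Hypergroup (H : Type*) where
  hmul : H → H → Set H
  one : H
  star : H → H
  assoc : ∀ p q r : H, (⋃ x ∈ hmul q r, hmul p x) = ⋃ x ∈ hmul p q, hmul x r
  hmul_one : ∀ s : H, hmul s one = {s}
  inv_left : ∀ p q r : H, r ∈ hmul p q → q ∈ hmul (star p) r
  inv_right : ∀ p q r : H, r ∈ hmul p q → p ∈ hmul r (star q)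

namespace Hypergroup

variable {H : Type*} (G : Hypergroup H)

/-- Complex (set) product: `AB = ⋃_{a ∈ A, b ∈ B} ab`. -/
def smul (A B : Set H) : Set H := ⋃ a ∈ A, ⋃ b ∈ B, G.hmul a b

/-- `A* = { a* | a ∈ A }`. -/
def sstar (A : Set H) : Set H := G.star '' A

/-- A nonempty subset `F` is closed if `F*F ⊆ F`. -/
def IsClosed (F : Set H) : Prop := F.Nonempty ∧ G.smul (G.sstar F) F ⊆ F

/-- `F` is normal in `K`: `Fk ⊆ kF` for all `k ∈ K`. -/
def IsNormalIn (F K : Set H) : Prop := ∀ k ∈ K, G.smul F {k} ⊆ G.smul {k} F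

/-- `F` is strongly normal in `K`: `k*Fk ⊆ F` for all `k ∈ K`. -/
def IsStronglyNormalIn (F K : Set H) : Prop :=
  ∀ k ∈ K, G.smul (G.smul {G.star k} F) {k} ⊆ F

/-- An element `s` is thin if `s*s = {1}`. -/
def IsThinElem (s : H) : Prop := G.hmul (G.star s) s = {G.one}

/-- A hypergroup is thin if all elements are thin. -/
def IsThin : Prop := ∀ s : H, G.IsThinElem s

/-- The center `Z(H) = {h | hx = xh for all x, h*h = {1}}`. -/
def center : Set H :=
  {h | (∀ x : H, G.hmul h x = G.hmul x h) ∧ G.hmul (G.star h) h = {G.one}}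

/-- The class `h^F := FhF`. -/
def cls (F : Set H) (h : H) : Set H := G.smul (G.smul F {h}) F

/-- The quotient set `H//F := { h^F | h ∈ H }`. -/
def quotSet (F : Set H) : Set (Set H) := Set.range (G.cls F)

/-- The class `h^F` as an element of `H//F`. -/
def qcls (F : Set H) (h : H) : G.quotSet F := ⟨G.cls F h, h, rfl⟩

/-- The full preimage in `H` of the center of the quotient `H//T`:
`{h | h^T ∈ Z(H//T)}`, i.e. `h^T` commutes with all classes `y^T` and
`(h^T)*(h^T) = {1^T} = {T}`. -/
def qCenterPre (T : Set H) : Set H :=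
  {h | (∀ y : H, G.cls T '' (G.smul (G.smul {h} T) {y}) =
          G.cls T '' (G.smul (G.smul {y} T) {h})) ∧
       G.cls T '' (G.smul (G.smul {G.star h} T) {h}) = {T}}

/-- The upper central series: `Z₀(H) = {1}`, and `Zᵢ₊₁(H)` is the full preimage
of `Z(H//Zᵢ(H))`, i.e. `Zᵢ₊₁(H)//Zᵢ(H) = Z(H//Zᵢ(H))`. -/
def upperCentral : ℕ → Set H
  | 0 => {G.one}
  | n + 1 => G.qCenterPre (upperCentral n)

/-- A hypergroup is weakly nilpotent if `Zₙ(H) = H` for some `n`. -/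
def WeaklyNilpotent : Prop := ∃ n : ℕ, G.upperCentral n = Set.univ

/-- `F` is subnormal in `K` via a chain of successively normal closed subsets. -/
def IsSubnormalIn (F K : Set H) : Prop :=
  ∃ n : ℕ, ∃ C : ℕ → Set H, C 0 = F ∧ C n = K ∧
    ∀ i < n, C i ⊆ C (i + 1) ∧ G.IsClosed (C (i + 1)) ∧ G.IsNormalIn (C i) (C (i + 1))

/-- The quotient `K//N` is thin: `(k^N)*(k^N) = {1^N}` for all `k ∈ K`. -/
def QuotThin (N K : Set H) : Prop :=
  ∀ k ∈ K, G.cls N '' (G.smul (G.smul {G.star k} N) {k}) = {N}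

/-- A residually-thin chain from `{1}` to `K`. -/
def RTChainOn (K : Set H) (n : ℕ) (C : ℕ → Set H) : Prop :=
  C 0 = {G.one} ∧ C n = K ∧
    ∀ i < n, C i ⊆ C (i + 1) ∧ G.IsClosed (C (i + 1)) ∧ G.QuotThin (C i) (C (i + 1))

/-- The valency `n_K = ∏ |Cᵢ₊₁//Cᵢ|` computed along some RT chain for `K`. -/
def HasValencyOn (K : Set H) (m : ℕ) : Prop :=
  ∃ n C, G.RTChainOn K n C ∧
    m = ∏ i ∈ Finset.range n, Nat.card (G.cls (C i) '' C (i + 1))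

/-- A closed `p`-subset: a closed subset whose valency is a power of `p`. -/
def PSubsetOn (p : ℕ) (K : Set H) : Prop :=
  G.IsClosed K ∧ ∃ m k : ℕ, G.HasValencyOn K m ∧ m = p ^ k

/-- `h` is `p`-valenced in `K`: for every subnormal closed `p`-subset `U` of `K`
such that `(h*)^U h^U` consists of thin elements of the quotient,
`n_{(h*)^U h^U} = |(h*)^U h^U|` is a power of `p`. -/
def PValencedElemOn (p : ℕ) (K : Set H) (h : H) : Prop :=
  ∀ U : Set H, G.IsClosed U → U ⊆ K → G.IsSubnormalIn U K → G.PSubsetOn p U →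
    (∀ x ∈ G.smul (G.smul {G.star h} U) {h},
      G.cls U '' (G.smul (G.smul {G.star x} U) {x}) = {U}) →
    ∃ k : ℕ, Nat.card (G.cls U '' (G.smul (G.smul {G.star h} U) {h})) = p ^ k

/-- `K` is `p`-valenced if all its elements are. -/
def PValencedOn (p : ℕ) (K : Set H) : Prop := ∀ h ∈ K, G.PValencedElemOn p K h

end Hypergroup

namespace Hypergroup

variable {H : Type*} (G : Hypergroup H)

section Basic

lemma a_mem_hmul_one (a : H) : a ∈ G.hmul a G.one := by
  rw [G.hmul_one]; rfl

lemma one_mem_starmul (a : H) : G.one ∈ G.hmul (G.star a) a :=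
  G.inv_left a G.one a (G.a_mem_hmul_one a)

lemma star_star (a : H) : G.star (G.star a) = a := by
  have h := G.inv_left (G.star a) a G.one (G.one_mem_starmul a)
  rw [G.hmul_one] at h
  exact h.symm

lemma one_mem_mulstar (a : H) : G.one ∈ G.hmul a (G.star a) := by
  have := G.one_mem_starmul (G.star a)
  rwa [G.star_star] at this

lemma one_hmul (s : H) : G.hmul G.one s = {s} := by
  ext x
  constructor
  · intro hx
    have h1 := G.inv_right G.one s x hx
    have h2 := G.inv_left x (G.star s) G.one h1
    rw [G.hmul_one] at h2
    have : G.star s = G.star x := h2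
    have := congrArg G.star this
    rw [G.star_star, G.star_star] at this
    exact (show x = s from this.symm) ▸ rfl
  · intro hx
    have hx' : x = s := hx
    subst hx'
    have := G.inv_right x (G.star x) G.one (G.one_mem_mulstar x)
    rwa [G.star_star] at this

lemma star_mem_hmul {p q r : H} (h : r ∈ G.hmul p q) :
    G.star r ∈ G.hmul (G.star q) (G.star p) := by
  have h1 := G.inv_right p q r h
  have h2 := G.inv_left r (G.star q) p h1
  exact G.inv_right (G.star r) p (G.star q) h2

lemma hmul_nonempty (p q : H) : (G.hmul p q).Nonempty := by
  have hassoc := G.assoc p q (G.star q)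
  have hp : p ∈ ⋃ x ∈ G.hmul q (G.star q), G.hmul p x := by
    refine Set.mem_iUnion.2 ⟨G.one, Set.mem_iUnion.2 ⟨G.one_mem_mulstar q, ?_⟩⟩
    exact G.a_mem_hmul_one p
  rw [hassoc] at hp
  rcases Set.mem_iUnion.1 hp with ⟨x, hx⟩
  rcases Set.mem_iUnion.1 hx with ⟨hx1, _⟩
  exact ⟨x, hx1⟩

lemma star_one : G.star G.one = G.one := by
  have := G.one_mem_starmul G.one
  rw [G.hmul_one] at this
  exact this.symm

end Basic

section Smul

lemma mem_smul {A B : Set H} {x : H} :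
    x ∈ G.smul A B ↔ ∃ a ∈ A, ∃ b ∈ B, x ∈ G.hmul a b := by
  simp [Hypergroup.smul]

lemma hmul_assoc_mem (a b c x : H) :
    (∃ y ∈ G.hmul a b, x ∈ G.hmul y c) ↔ ∃ z ∈ G.hmul b c, x ∈ G.hmul a z := by
  have h := Set.ext_iff.1 (G.assoc a b c) x
  simpa [Set.mem_iUnion] using h.symm

lemma smul_assoc (A B C : Set H) :
    G.smul (G.smul A B) C = G.smul A (G.smul B C) := by
  ext x
  simp only [G.mem_smul]
  constructor
  · rintro ⟨y, ⟨a, ha, b, hb, hy⟩, c, hc, hx⟩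
    rcases (G.hmul_assoc_mem a b c x).1 ⟨y, hy, hx⟩ with ⟨z, hz, hxz⟩
    exact ⟨a, ha, z, ⟨b, hb, c, hc, hz⟩, hxz⟩
  · rintro ⟨a, ha, z, ⟨b, hb, c, hc, hz⟩, hx⟩
    rcases (G.hmul_assoc_mem a b c x).2 ⟨z, hz, hx⟩ with ⟨y, hy, hxy⟩
    exact ⟨y, ⟨a, ha, b, hb, hy⟩, c, hc, hxy⟩

lemma smul_singleton (a b : H) : G.smul {a} {b} = G.hmul a b := by
  ext x; simp [G.mem_smul]

lemma smul_mono {A A' B B' : Set H} (h1 : A ⊆ A') (h2 : B ⊆ B') :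
    G.smul A B ⊆ G.smul A' B' := by
  intro x hx
  rcases G.mem_smul.1 hx with ⟨a, ha, b, hb, hab⟩
  exact G.mem_smul.2 ⟨a, h1 ha, b, h2 hb, hab⟩

lemma smul_nonempty {A B : Set H} (h1 : A.Nonempty) (h2 : B.Nonempty) :
    (G.smul A B).Nonempty := by
  rcases h1 with ⟨a, ha⟩; rcases h2 with ⟨b, hb⟩
  rcases G.hmul_nonempty a b with ⟨x, hx⟩
  exact ⟨x, G.mem_smul.2 ⟨a, ha, b, hb, hx⟩⟩

lemma subset_smul_left {T : Set H} (h1 : G.one ∈ T) (A : Set H) :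
    A ⊆ G.smul T A := fun a ha =>
  G.mem_smul.2 ⟨G.one, h1, a, ha, by rw [G.one_hmul]; rfl⟩

lemma subset_smul_right {T : Set H} (h1 : G.one ∈ T) (A : Set H) :
    A ⊆ G.smul A T := fun a ha =>
  G.mem_smul.2 ⟨a, ha, G.one, h1, G.a_mem_hmul_one a⟩

lemma sstar_smul (A B : Set H) :
    G.sstar (G.smul A B) = G.smul (G.sstar B) (G.sstar A) := by
  ext z
  constructor
  · rintro ⟨w, hw, rfl⟩
    rcases G.mem_smul.1 hw with ⟨a, ha, b, hb, hab⟩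
    exact G.mem_smul.2 ⟨G.star b, ⟨b, hb, rfl⟩, G.star a, ⟨a, ha, rfl⟩,
      G.star_mem_hmul hab⟩
  · intro hz
    rcases G.mem_smul.1 hz with ⟨b', ⟨b, hb, rfl⟩, a', ⟨a, ha, rfl⟩, hab⟩
    refine ⟨G.star z, ?_, G.star_star z⟩
    have := G.star_mem_hmul hab
    rw [G.star_star, G.star_star] at this
    exact G.mem_smul.2 ⟨a, ha, b, hb, this⟩

lemma sstar_singleton (a : H) : G.sstar {a} = {G.star a} := by
  simp [Hypergroup.sstar]

lemma sstar_sstar (A : Set H) : G.sstar (G.sstar A) = A := by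
  ext x
  constructor
  · rintro ⟨y, ⟨z, hz, rfl⟩, rfl⟩
    rwa [G.star_star]
  · intro hx
    exact ⟨G.star x, ⟨x, hx, rfl⟩, G.star_star x⟩

end Smul

end Hypergroup
namespace Hypergroup

variable {H : Type*} (G : Hypergroup H)

section Closed

variable {T : Set H}

lemma one_mem_closed (hT : G.IsClosed T) : G.one ∈ T := by
  rcases hT.1 with ⟨a, ha⟩
  exact hT.2 (G.mem_smul.2 ⟨G.star a, ⟨a, ha, rfl⟩, a, ha, G.one_mem_starmul a⟩)

lemma star_mem_closed (hT : G.IsClosed T) {t : H} (ht : t ∈ T) : G.star t ∈ T := by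
  refine hT.2 (G.mem_smul.2 ⟨G.star t, ⟨t, ht, rfl⟩, G.one, G.one_mem_closed hT, ?_⟩)
  exact G.a_mem_hmul_one (G.star t)

lemma sstar_closed (hT : G.IsClosed T) : G.sstar T = T := by
  ext x
  constructor
  · rintro ⟨t, ht, rfl⟩; exact G.star_mem_closed hT ht
  · intro hx; exact ⟨G.star x, G.star_mem_closed hT hx, G.star_star x⟩

lemma smul_self_subset (hT : G.IsClosed T) : G.smul T T ⊆ T := by
  have := hT.2
  rwa [G.sstar_closed hT] at this

lemma smul_self_eq (hT : G.IsClosed T) : G.smul T T = T :=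
  Set.Subset.antisymm (G.smul_self_subset hT) (G.subset_smul_right (G.one_mem_closed hT) T)

lemma smul_subset_closed (hT : G.IsClosed T) {A B : Set H} (hA : A ⊆ T) (hB : B ⊆ T) :
    G.smul A B ⊆ T := fun x hx =>
  G.smul_self_subset hT (G.smul_mono hA hB hx)

lemma hmul_subset_closed (hT : G.IsClosed T) {a b : H} (ha : a ∈ T) (hb : b ∈ T) :
    G.hmul a b ⊆ T := by
  rw [← G.smul_singleton]
  exact G.smul_subset_closed hT (Set.singleton_subset_iff.2 ha) (Set.singleton_subset_iff.2 hb)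

lemma smul_absorb_left (hT : G.IsClosed T) (A : Set H) :
    G.smul T (G.smul T A) = G.smul T A := by
  rw [← G.smul_assoc, G.smul_self_eq hT]

lemma smul_absorb_right (hT : G.IsClosed T) (A : Set H) :
    G.smul (G.smul A T) T = G.smul A T := by
  rw [G.smul_assoc, G.smul_self_eq hT]

end Closed

section Cls

variable {T : Set H}

lemma cls_def (x : H) : G.cls T x = G.smul (G.smul T {x}) T := rfl

lemma mem_cls_self (hT : G.IsClosed T) (x : H) : x ∈ G.cls T x := by
  refine G.mem_smul.2 ⟨x, ?_, G.one, G.one_mem_closed hT, G.a_mem_hmul_one x⟩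
  exact G.mem_smul.2 ⟨G.one, G.one_mem_closed hT, x, rfl, by rw [G.one_hmul]; rfl⟩

lemma cls_sym (hT : G.IsClosed T) {x y : H} (h : x ∈ G.cls T y) : y ∈ G.cls T x := by
  rcases G.mem_smul.1 h with ⟨w, hw, t2, ht2, hx⟩
  rcases G.mem_smul.1 hw with ⟨t1, ht1, y', hy', hwm⟩
  have hy'' : y' = y := hy'
  subst hy''
  have h1 : y' ∈ G.hmul (G.star t1) w := G.inv_left t1 y' w hwm
  have h2 : w ∈ G.hmul x (G.star t2) := G.inv_right w t2 x hx
  rcases (G.hmul_assoc_mem (G.star t1) x (G.star t2) y').2 ⟨w, h2, h1⟩ with ⟨q, hq, hyq⟩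
  exact G.mem_smul.2 ⟨q, G.mem_smul.2 ⟨G.star t1, G.star_mem_closed hT ht1, x, rfl, hq⟩,
    G.star t2, G.star_mem_closed hT ht2, hyq⟩

lemma mem_sat (hT : G.IsClosed T) {A : Set H} {z : H} :
    z ∈ G.smul (G.smul T A) T ↔ ∃ a ∈ A, z ∈ G.cls T a := by
  constructor
  · intro hz
    rcases G.mem_smul.1 hz with ⟨w, hw, t2, ht2, hzm⟩
    rcases G.mem_smul.1 hw with ⟨t1, ht1, a, ha, hwm⟩
    exact ⟨a, ha, G.mem_smul.2 ⟨w, G.mem_smul.2 ⟨t1, ht1, a, rfl, hwm⟩, t2, ht2, hzm⟩⟩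
  · rintro ⟨a, ha, hz⟩
    rcases G.mem_smul.1 hz with ⟨w, hw, t2, ht2, hzm⟩
    rcases G.mem_smul.1 hw with ⟨t1, ht1, a', ha', hwm⟩
    have : a' = a := ha'
    subst this
    exact G.mem_smul.2 ⟨w, G.mem_smul.2 ⟨t1, ht1, a', ha, hwm⟩, t2, ht2, hzm⟩

lemma smul_cls_left (hT : G.IsClosed T) (y : H) :
    G.smul T (G.cls T y) = G.cls T y := by
  rw [G.cls_def, ← G.smul_assoc, G.smul_absorb_left hT]

lemma smul_cls_right (hT : G.IsClosed T) (y : H) :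
    G.smul (G.cls T y) T = G.cls T y := by
  rw [G.cls_def, G.smul_absorb_right hT]

lemma cls_subset_of_mem (hT : G.IsClosed T) {x y : H} (h : x ∈ G.cls T y) :
    G.cls T x ⊆ G.cls T y := by
  intro z hz
  have h1 : z ∈ G.smul (G.smul T (G.cls T y)) T := by
    rcases G.mem_smul.1 hz with ⟨w, hw, t2, ht2, hzm⟩
    rcases G.mem_smul.1 hw with ⟨t1, ht1, x', hx', hwm⟩
    have : x' = x := hx'
    subst this
    exact G.mem_smul.2 ⟨w, G.mem_smul.2 ⟨t1, ht1, x', h, hwm⟩, t2, ht2, hzm⟩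
  rwa [G.smul_cls_left hT, G.smul_cls_right hT] at h1

lemma cls_eq_of_mem (hT : G.IsClosed T) {x y : H} (h : x ∈ G.cls T y) :
    G.cls T x = G.cls T y :=
  Set.Subset.antisymm (G.cls_subset_of_mem hT h)
    (G.cls_subset_of_mem hT (G.cls_sym hT h))

lemma cls_of_mem (hT : G.IsClosed T) {t : H} (ht : t ∈ T) : G.cls T t = T := by
  apply Set.Subset.antisymm
  · exact G.smul_subset_closed hT
      (G.smul_subset_closed hT (le_refl T) (Set.singleton_subset_iff.2 ht)) (le_refl T)
  · intro t' ht'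
    have h1 : G.one ∈ G.hmul (G.star t) t := G.one_mem_starmul t
    have h2 : t' ∈ G.hmul t' G.one := G.a_mem_hmul_one t'
    rcases (G.hmul_assoc_mem t' (G.star t) t t').2 ⟨G.one, h1, h2⟩ with ⟨q, hq, ht'q⟩
    have hqT : q ∈ T := G.hmul_subset_closed hT ht' (G.star_mem_closed hT ht) hq
    exact G.mem_smul.2 ⟨t', G.mem_smul.2 ⟨q, hqT, t, rfl, ht'q⟩, G.one, G.one_mem_closed hT,
      G.a_mem_hmul_one t'⟩

lemma cls_image_eq_iff (hT : G.IsClosed T) {A B : Set H} :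
    G.cls T '' A = G.cls T '' B ↔
      G.smul (G.smul T A) T = G.smul (G.smul T B) T := by
  constructor
  · intro h
    ext z
    rw [G.mem_sat hT, G.mem_sat hT]
    constructor
    · rintro ⟨a, ha, hz⟩
      have : G.cls T a ∈ G.cls T '' B := h ▸ ⟨a, ha, rfl⟩
      rcases this with ⟨b, hb, hba⟩
      exact ⟨b, hb, hba ▸ hz⟩
    · rintro ⟨b, hb, hz⟩
      have : G.cls T b ∈ G.cls T '' A := h.symm ▸ ⟨b, hb, rfl⟩
      rcases this with ⟨a, ha, hab⟩
      exact ⟨a, ha, hab ▸ hz⟩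
  · intro h
    ext c
    constructor
    · rintro ⟨a, ha, rfl⟩
      have : a ∈ G.smul (G.smul T B) T := by
        rw [← h]; exact (G.mem_sat hT).2 ⟨a, ha, G.mem_cls_self hT a⟩
      rcases (G.mem_sat hT).1 this with ⟨b, hb, hab⟩
      exact ⟨b, hb, (G.cls_eq_of_mem hT hab).symm⟩
    · rintro ⟨b, hb, rfl⟩
      have : b ∈ G.smul (G.smul T A) T := by
        rw [h]; exact (G.mem_sat hT).2 ⟨b, hb, G.mem_cls_self hT b⟩
      rcases (G.mem_sat hT).1 this with ⟨a, ha, hba⟩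
      exact ⟨a, ha, (G.cls_eq_of_mem hT hba).symm⟩

lemma cls_image_singleton_iff (hT : G.IsClosed T) {A : Set H} :
    G.cls T '' A = {T} ↔ A.Nonempty ∧ A ⊆ T := by
  constructor
  · intro h
    have hne : A.Nonempty := by
      by_contra hc
      rw [Set.not_nonempty_iff_eq_empty] at hc
      subst hc
      simp at h
    refine ⟨hne, fun a ha => ?_⟩
    have : G.cls T a ∈ ({T} : Set (Set H)) := h ▸ ⟨a, ha, rfl⟩
    have hc : G.cls T a = T := this
    exact hc ▸ G.mem_cls_self hT a
  · rintro ⟨hne, hsub⟩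
    apply Set.Subset.antisymm
    · rintro c ⟨a, ha, rfl⟩
      exact G.cls_of_mem hT (hsub ha)
    · rintro c hc
      have hc' : c = T := hc
      subst hc'
      rcases hne with ⟨a, ha⟩
      exact ⟨a, ha, G.cls_of_mem hT (hsub ha)⟩

end Cls

end Hypergroup
namespace Hypergroup

variable {H : Type*} (G : Hypergroup H)

section QCP

variable {T T' : Set H}

/-- characterization of membership in `qCenterPre` via saturated products -/
lemma mem_qCP_iff (hT : G.IsClosed T) {h : H} :
    h ∈ G.qCenterPre T ↔
      ((∀ y : H, G.smul (G.smul T (G.smul (G.smul {h} T) {y})) T =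
          G.smul (G.smul T (G.smul (G.smul {y} T) {h})) T) ∧
        G.smul (G.smul {G.star h} T) {h} ⊆ T) := by
  have hne : (G.smul (G.smul {G.star h} T) {h}).Nonempty :=
    G.smul_nonempty (G.smul_nonempty ⟨G.star h, rfl⟩ ⟨G.one, G.one_mem_closed hT⟩)
      ⟨h, rfl⟩
  constructor
  · rintro ⟨hc, ht⟩
    refine ⟨fun y => (G.cls_image_eq_iff hT).1 (hc y), ?_⟩
    exact ((G.cls_image_singleton_iff hT).1 ht).2
  · rintro ⟨hc, ht⟩
    exact ⟨fun y => (G.cls_image_eq_iff hT).2 (hc y),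
      (G.cls_image_singleton_iff hT).2 ⟨hne, ht⟩⟩

lemma sat_chain_eq (hT : G.IsClosed T) (a b : H) :
    G.smul (G.smul T (G.smul (G.smul {a} T) {b})) T =
      G.smul (G.cls T a) (G.cls T b) := by
  simp only [G.cls_def, G.smul_assoc, G.smul_absorb_left hT]

lemma subset_sat (hT : G.IsClosed T) (A : Set H) :
    A ⊆ G.smul (G.smul T A) T :=
  fun a ha => G.subset_smul_right (G.one_mem_closed hT) _
    (G.subset_smul_left (G.one_mem_closed hT) A ha)

lemma sat_subset (hT : G.IsClosed T) {A : Set H} (h : A ⊆ T) :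
    G.smul (G.smul T A) T ⊆ T :=
  G.smul_subset_closed hT (G.smul_subset_closed hT (le_refl T) h) (le_refl T)

lemma triv_embed (hT : G.IsClosed T) (a b : H) :
    G.hmul a b ⊆ G.smul (G.smul T (G.smul (G.smul {a} T) {b})) T := by
  intro x hx
  have h1 : x ∈ G.smul (G.smul {a} T) {b} :=
    G.mem_smul.2 ⟨a, G.subset_smul_right (G.one_mem_closed hT) {a} rfl, b, rfl, hx⟩
  exact G.subset_sat hT _ h1

lemma qCP_sat (hT : G.IsClosed T) {h : H} (hh : h ∈ G.qCenterPre T) (y : H) :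
    G.smul (G.smul T (G.smul (G.smul {h} T) {y})) T =
      G.smul (G.smul T (G.smul (G.smul {y} T) {h})) T :=
  ((G.mem_qCP_iff hT).1 hh).1 y

lemma qCP_cls_comm (hT : G.IsClosed T) {h : H} (hh : h ∈ G.qCenterPre T) (y : H) :
    G.smul (G.cls T h) (G.cls T y) = G.smul (G.cls T y) (G.cls T h) := by
  rw [← G.sat_chain_eq hT, ← G.sat_chain_eq hT]
  exact G.qCP_sat hT hh y

lemma qCP_thin_r (hT : G.IsClosed T) {h : H} (hh : h ∈ G.qCenterPre T) :
    G.smul (G.smul {G.star h} T) {h} ⊆ T :=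
  ((G.mem_qCP_iff hT).1 hh).2

lemma qCP_thin_l (hT : G.IsClosed T) {h : H} (hh : h ∈ G.qCenterPre T) :
    G.smul (G.smul {h} T) {G.star h} ⊆ T := by
  intro z hz
  have h1 : z ∈ G.smul (G.smul T (G.smul (G.smul {h} T) {G.star h})) T :=
    G.subset_sat hT _ hz
  rw [G.qCP_sat hT hh (G.star h)] at h1
  exact G.sat_subset hT (G.qCP_thin_r hT hh) h1

lemma Th_sub_hT (hT : G.IsClosed T) {h : H}
    (hr : G.smul (G.smul {G.star h} T) {h} ⊆ T) :
    G.smul T {h} ⊆ G.smul {h} T := by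
  intro z hz
  rcases G.mem_smul.1 hz with ⟨t, ht, h', hh', hzm⟩
  have hh'' : h' = h := hh'
  subst hh''
  rcases G.hmul_nonempty (G.star h') z with ⟨s, hs⟩
  rcases (G.hmul_assoc_mem (G.star h') t h' s).2 ⟨z, hzm, hs⟩ with ⟨q, hq, hsq⟩
  have hsT : s ∈ T := hr (G.mem_smul.2
    ⟨q, G.mem_smul.2 ⟨G.star h', rfl, t, ht, hq⟩, h', rfl, hsq⟩)
  have hz2 : z ∈ G.hmul h' s := by
    have := G.inv_left (G.star h') z s hs
    rwa [G.star_star] at this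
  exact G.mem_smul.2 ⟨h', rfl, s, hsT, hz2⟩

lemma hT_sub_Th (hT : G.IsClosed T) {h : H}
    (hl : G.smul (G.smul {h} T) {G.star h} ⊆ T) :
    G.smul {h} T ⊆ G.smul T {h} := by
  intro z hz
  rcases G.mem_smul.1 hz with ⟨h', hh', t, ht, hzm⟩
  have hh'' : h' = h := hh'
  subst hh''
  rcases G.hmul_nonempty z (G.star h') with ⟨s, hs⟩
  rcases (G.hmul_assoc_mem h' t (G.star h') s).1 ⟨z, hzm, hs⟩ with ⟨w, hw, hsw⟩
  have hsT : s ∈ T := by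
    apply hl
    have : s ∈ G.smul {h'} (G.smul T {G.star h'}) :=
      G.mem_smul.2 ⟨h', rfl, w, G.mem_smul.2 ⟨t, ht, G.star h', rfl, hw⟩, hsw⟩
    rwa [← G.smul_assoc] at this
  have hz2 : z ∈ G.hmul s h' := by
    have := G.inv_right z (G.star h') s hs
    rwa [G.star_star] at this
  exact G.mem_smul.2 ⟨s, hsT, h', rfl, hz2⟩

lemma qCP_Th_eq (hT : G.IsClosed T) {h : H} (hh : h ∈ G.qCenterPre T) :
    G.smul T {h} = G.smul {h} T :=
  Set.Subset.antisymm (G.Th_sub_hT hT (G.qCP_thin_r hT hh))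
    (G.hT_sub_Th hT (G.qCP_thin_l hT hh))

lemma qCP_cls_eq (hT : G.IsClosed T) {h : H} (hh : h ∈ G.qCenterPre T) :
    G.cls T h = G.smul {h} T := by
  rw [G.cls_def, G.qCP_Th_eq hT hh, G.smul_assoc, G.smul_self_eq hT]

lemma left_coset_of_thin (hT : G.IsClosed T) {h : H}
    (hl : G.smul (G.smul {h} T) {G.star h} ⊆ T) {y u : H} (hu : u ∈ G.hmul h y) :
    G.smul (G.smul {h} T) {y} ⊆ G.smul T {u} := by
  intro z hz
  rcases G.mem_smul.1 hz with ⟨w, hw, y', hy', hzm⟩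
  have hy'' : y' = y := hy'
  subst hy''
  have hy1 : y' ∈ G.hmul (G.star h) u := G.inv_left h y' u hu
  rcases (G.hmul_assoc_mem w (G.star h) u z).2 ⟨y', hy1, hzm⟩ with ⟨q, hq, hzq⟩
  have hqT : q ∈ T := by
    apply hl
    rcases G.mem_smul.1 hw with ⟨h', hh', t, ht, hwm⟩
    have hh'' : h' = h := hh'
    subst hh''
    exact G.mem_smul.2 ⟨w, G.mem_smul.2 ⟨h', rfl, t, ht, hwm⟩, G.star h', rfl, hq⟩
  exact G.mem_smul.2 ⟨q, hqT, u, rfl, hzq⟩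

lemma right_coset_of_thin (hT : G.IsClosed T) {h : H}
    (hr : G.smul (G.smul {G.star h} T) {h} ⊆ T) {y v : H} (hv : v ∈ G.hmul y h) :
    G.smul (G.smul {y} T) {h} ⊆ G.smul {v} T := by
  intro z hz
  rcases G.mem_smul.1 hz with ⟨w, hw, h', hh', hzm⟩
  have hh'' : h' = h := hh'
  subst hh''
  rcases G.mem_smul.1 hw with ⟨y', hy', t, ht, hwm⟩
  have hy'' : y' = y := hy'
  subst hy''
  have hyv : y' ∈ G.hmul v (G.star h') := G.inv_right y' h' v hv
  rcases (G.hmul_assoc_mem v (G.star h') t w).1 ⟨y', hyv, hwm⟩ with ⟨q, hq, hwq⟩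
  rcases (G.hmul_assoc_mem v q h' z).1 ⟨w, hwq, hzm⟩ with ⟨s, hs, hzs⟩
  have hsT : s ∈ T :=
    hr (G.mem_smul.2 ⟨q, G.mem_smul.2 ⟨G.star h', rfl, t, ht, hq⟩, h', rfl, hs⟩)
  exact G.mem_smul.2 ⟨v, rfl, s, hsT, hzs⟩

lemma cls_hmul (hT : G.IsClosed T) {h : H}
    (hl : G.smul (G.smul {h} T) {G.star h} ⊆ T) {k x : H} (hx : x ∈ G.hmul h k) :
    G.cls T x = G.smul (G.cls T h) (G.cls T k) := by
  rw [← G.sat_chain_eq hT]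
  apply Set.Subset.antisymm
  · have h1 : ({x} : Set H) ⊆ G.smul (G.smul {h} T) {k} :=
      Set.singleton_subset_iff.2
        (G.mem_smul.2 ⟨h, G.subset_smul_right (G.one_mem_closed hT) {h} rfl, k, rfl, hx⟩)
    rw [G.cls_def]
    exact G.smul_mono (G.smul_mono (le_refl T) h1) (le_refl T)
  · have h1 : G.smul (G.smul {h} T) {k} ⊆ G.smul T {x} :=
      G.left_coset_of_thin hT hl hx
    have h2 : G.smul (G.smul T (G.smul (G.smul {h} T) {k})) T ⊆
        G.smul (G.smul T (G.smul T {x})) T :=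
      G.smul_mono (G.smul_mono (le_refl T) h1) (le_refl T)
    rwa [G.smul_absorb_left hT] at h2

lemma subset_qCP (hT : G.IsClosed T) : T ⊆ G.qCenterPre T := by
  intro t ht
  rw [G.mem_qCP_iff hT]
  constructor
  · intro y
    rw [G.sat_chain_eq hT, G.sat_chain_eq hT, G.cls_of_mem hT ht,
      G.smul_cls_left hT, G.smul_cls_right hT]
  · apply G.smul_subset_closed hT
    · exact G.smul_subset_closed hT (Set.singleton_subset_iff.2 (G.star_mem_closed hT ht))
        (le_refl T)
    · exact Set.singleton_subset_iff.2 ht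

lemma star_mem_qCP (hT : G.IsClosed T) {h : H} (hh : h ∈ G.qCenterPre T) :
    G.star h ∈ G.qCenterPre T := by
  rw [G.mem_qCP_iff hT]
  constructor
  · intro y
    have E := congrArg G.sstar (G.qCP_sat hT hh (G.star y))
    simp only [G.sstar_smul, G.sstar_closed hT, G.sstar_singleton, G.star_star,
      G.smul_assoc] at E
    simp only [G.smul_assoc]
    exact E.symm
  · rw [G.star_star]
    exact G.qCP_thin_l hT hh

lemma hmul_mem_qCP (hT : G.IsClosed T) {h k : H} (hh : h ∈ G.qCenterPre T)
    (hk : k ∈ G.qCenterPre T) {x : H} (hx : x ∈ G.hmul h k) :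
    x ∈ G.qCenterPre T := by
  rw [G.mem_qCP_iff hT]
  constructor
  · intro y
    rw [G.sat_chain_eq hT, G.sat_chain_eq hT,
      G.cls_hmul hT (G.qCP_thin_l hT hh) hx]
    calc G.smul (G.smul (G.cls T h) (G.cls T k)) (G.cls T y)
        = G.smul (G.cls T h) (G.smul (G.cls T k) (G.cls T y)) := G.smul_assoc _ _ _
      _ = G.smul (G.cls T h) (G.smul (G.cls T y) (G.cls T k)) := by
            rw [G.qCP_cls_comm hT hk y]
      _ = G.smul (G.smul (G.cls T h) (G.cls T y)) (G.cls T k) := (G.smul_assoc _ _ _).symm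
      _ = G.smul (G.smul (G.cls T y) (G.cls T h)) (G.cls T k) := by
            rw [G.qCP_cls_comm hT hh y]
      _ = G.smul (G.cls T y) (G.smul (G.cls T h) (G.cls T k)) := G.smul_assoc _ _ _
  · have hsub1 : ({G.star x} : Set H) ⊆ G.smul {G.star k} {G.star h} := by
      rw [G.smul_singleton]
      exact Set.singleton_subset_iff.2 (G.star_mem_hmul hx)
    have hsub2 : ({x} : Set H) ⊆ G.smul {h} {k} := by
      rw [G.smul_singleton]
      exact Set.singleton_subset_iff.2 hx
    have h1 : G.smul (G.smul {G.star x} T) {x} ⊆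
        G.smul (G.smul (G.smul {G.star k} {G.star h}) T) (G.smul {h} {k}) :=
      G.smul_mono (G.smul_mono hsub1 (le_refl T)) hsub2
    have h2 : G.smul (G.smul (G.smul {G.star k} {G.star h}) T) (G.smul {h} {k})
        = G.smul {G.star k} (G.smul (G.smul (G.smul {G.star h} T) {h}) {k}) := by
      simp only [G.smul_assoc]
    intro z hz
    have hz2 := h1 hz
    rw [h2] at hz2
    have h3 : G.smul {G.star k} (G.smul (G.smul (G.smul {G.star h} T) {h}) {k}) ⊆
        G.smul {G.star k} (G.smul T {k}) :=
      G.smul_mono (le_refl _) (G.smul_mono (G.qCP_thin_r hT hh) (le_refl _))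
    have hz3 := h3 hz2
    rw [← G.smul_assoc] at hz3
    exact G.qCP_thin_r hT hk hz3

lemma qCP_closed (hT : G.IsClosed T) : G.IsClosed (G.qCenterPre T) := by
  constructor
  · exact ⟨G.one, G.subset_qCP hT (G.one_mem_closed hT)⟩
  · intro z hz
    rcases G.mem_smul.1 hz with ⟨a', ⟨a, ha, rfl⟩, b, hb, hzm⟩
    exact G.hmul_mem_qCP hT (G.star_mem_qCP hT ha) hb hzm

lemma cls_normal_eq (hT : G.IsClosed T)
    (hN : ∀ x : H, G.smul T {x} = G.smul {x} T) (x : H) :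
    G.cls T x = G.smul {x} T := by
  rw [G.cls_def, hN x, G.smul_assoc, G.smul_self_eq hT]

lemma qCP_push (hT : G.IsClosed T) (hN : ∀ x : H, G.smul T {x} = G.smul {x} T)
    {h : H} (hh : h ∈ G.qCenterPre T) (x : H) :
    G.hmul h x ⊆ G.smul (G.hmul x h) T := by
  have h0 : G.hmul h x ⊆ G.smul (G.smul T (G.smul (G.smul {x} T) {h})) T := by
    intro z hz
    have := G.triv_embed hT h x hz
    rwa [G.qCP_sat hT hh x] at this
  have h1 : G.smul (G.smul T (G.smul (G.smul {x} T) {h})) T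
      = G.smul (G.hmul x h) T := by
    rw [G.sat_chain_eq hT, G.cls_normal_eq hT hN x, G.qCP_cls_eq hT hh]
    calc G.smul (G.smul {x} T) (G.smul {h} T)
        = G.smul {x} (G.smul T (G.smul {h} T)) := G.smul_assoc _ _ _
      _ = G.smul {x} (G.smul (G.smul T {h}) T) := by rw [G.smul_assoc]
      _ = G.smul {x} (G.smul (G.smul {h} T) T) := by rw [G.qCP_Th_eq hT hh]
      _ = G.smul {x} (G.smul {h} (G.smul T T)) := by rw [G.smul_assoc]
      _ = G.smul {x} (G.smul {h} T) := by rw [G.smul_self_eq hT]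
      _ = G.smul (G.smul {x} {h}) T := (G.smul_assoc _ _ _).symm
      _ = G.smul (G.hmul x h) T := by rw [G.smul_singleton]
  rwa [h1] at h0

lemma qCP_push' (hT : G.IsClosed T) (hN : ∀ x : H, G.smul T {x} = G.smul {x} T)
    {h : H} (hh : h ∈ G.qCenterPre T) (x : H) :
    G.hmul x h ⊆ G.smul (G.smul {h} T) {x} := by
  have h0 : G.hmul x h ⊆ G.smul (G.smul T (G.smul (G.smul {h} T) {x})) T := by
    intro z hz
    have := G.triv_embed hT x h hz
    rwa [← G.qCP_sat hT hh x] at this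
  have h1 : G.smul (G.smul T (G.smul (G.smul {h} T) {x})) T
      = G.smul (G.smul {h} T) {x} := by
    rw [G.sat_chain_eq hT, G.cls_normal_eq hT hN x, G.qCP_cls_eq hT hh]
    calc G.smul (G.smul {h} T) (G.smul {x} T)
        = G.smul {h} (G.smul T (G.smul {x} T)) := G.smul_assoc _ _ _
      _ = G.smul {h} (G.smul (G.smul T {x}) T) := by rw [G.smul_assoc]
      _ = G.smul {h} (G.smul (G.smul {x} T) T) := by rw [hN x]
      _ = G.smul {h} (G.smul {x} (G.smul T T)) := by rw [G.smul_assoc]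
      _ = G.smul {h} (G.smul {x} T) := by rw [G.smul_self_eq hT]
      _ = G.smul {h} (G.smul T {x}) := by rw [hN x]
      _ = G.smul (G.smul {h} T) {x} := (G.smul_assoc _ _ _).symm
  rwa [h1] at h0

lemma qCP_normal (hT : G.IsClosed T) (hN : ∀ x : H, G.smul T {x} = G.smul {x} T) :
    ∀ x : H, G.smul (G.qCenterPre T) {x} = G.smul {x} (G.qCenterPre T) := by
  intro x
  apply Set.Subset.antisymm
  · intro z hz
    rcases G.mem_smul.1 hz with ⟨a, ha, x', hx', hzm⟩
    have hx'' : x' = x := hx'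
    subst hx''
    have hz2 := G.qCP_push hT hN ha x' hzm
    rcases G.mem_smul.1 hz2 with ⟨v, hv, t, ht, hzv⟩
    rcases (G.hmul_assoc_mem x' a t z).1 ⟨v, hv, hzv⟩ with ⟨w, hw, hzw⟩
    have hwq : w ∈ G.qCenterPre T :=
      G.hmul_subset_closed (G.qCP_closed hT) ha (G.subset_qCP hT ht) hw
    exact G.mem_smul.2 ⟨x', rfl, w, hwq, hzw⟩
  · intro z hz
    rcases G.mem_smul.1 hz with ⟨x', hx', a, ha, hzm⟩
    have hx'' : x' = x := hx'
    subst hx''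
    have hz2 := G.qCP_push' hT hN ha x' hzm
    rcases G.mem_smul.1 hz2 with ⟨w, hw, x'', hx'', hzw⟩
    have hx3 : x'' = x' := hx''
    subst hx3
    rcases G.mem_smul.1 hw with ⟨a', ha', t, ht, hwm⟩
    have ha'' : a' = a := ha'
    subst ha''
    have hwq : w ∈ G.qCenterPre T :=
      G.hmul_subset_closed (G.qCP_closed hT) ha (G.subset_qCP hT ht) hwm
    exact G.mem_smul.2 ⟨w, hwq, x'', rfl, hzw⟩

end QCP

end Hypergroup
namespace Hypergroup

variable {H : Type*} (G : Hypergroup H)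

section Mono

variable {T T' : Set H}

lemma push_set (hT : G.IsClosed T) {h : H} (hh : h ∈ G.qCenterPre T) (W : Set H) :
    G.smul {h} W ⊆ G.smul T (G.smul W (G.smul T (G.smul {h} T))) := by
  intro z hz
  rcases G.mem_smul.1 hz with ⟨h', hh', w, hw, hzm⟩
  have hh'' : h' = h := hh'
  subst hh''
  have h1 : z ∈ G.smul (G.smul T (G.smul (G.smul {w} T) {h'})) T := by
    have := G.triv_embed hT h' w hzm
    rwa [G.qCP_sat hT hh w] at this
  have h2 : G.smul (G.smul T (G.smul (G.smul {w} T) {h'})) T ⊆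
      G.smul T (G.smul W (G.smul T (G.smul {h'} T))) := by
    have e : G.smul (G.smul T (G.smul (G.smul {w} T) {h'})) T =
        G.smul T (G.smul {w} (G.smul T (G.smul {h'} T))) := by
      simp only [G.smul_assoc]
    rw [e]
    exact G.smul_mono (le_refl T)
      (G.smul_mono (Set.singleton_subset_iff.2 hw) (le_refl _))
  exact h2 h1

lemma qCP_mono_half (hT : G.IsClosed T) (hT' : G.IsClosed T') (hsub : T ⊆ T')
    {h : H} (hh : h ∈ G.qCenterPre T) (y : H) :
    G.smul (G.smul T' (G.smul (G.smul {h} T') {y})) T' ⊆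
      G.smul (G.smul T' (G.smul (G.smul {y} T') {h})) T' := by
  have e1 : G.smul (G.smul T' (G.smul (G.smul {h} T') {y})) T' =
      G.smul T' (G.smul {h} (G.smul T' (G.smul {y} T'))) := by
    simp only [G.smul_assoc]
  set W := G.smul T' (G.smul {y} T') with hW
  have step1 : G.smul T' (G.smul {h} W) ⊆
      G.smul T' (G.smul T (G.smul W (G.smul T (G.smul {h} T)))) :=
    G.smul_mono (le_refl T') (G.push_set hT hh W)
  have step2 : G.smul T' (G.smul T (G.smul W (G.smul T (G.smul {h} T)))) ⊆
      G.smul T' (G.smul T' (G.smul W (G.smul T' (G.smul {h} T')))) :=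
    G.smul_mono (le_refl T') (G.smul_mono hsub (G.smul_mono (le_refl W)
      (G.smul_mono hsub (G.smul_mono (le_refl _) hsub))))
  have e2 : G.smul T' (G.smul T' (G.smul W (G.smul T' (G.smul {h} T')))) =
      G.smul (G.smul T' (G.smul (G.smul {y} T') {h})) T' := by
    rw [hW]
    simp only [G.smul_assoc, G.smul_absorb_left hT']
  rw [e1]
  intro z hz
  rw [← e2]
  exact step2 (step1 hz)

lemma qCP_mono (hT : G.IsClosed T) (hT' : G.IsClosed T') (hsub : T ⊆ T')
    {h : H} (hh : h ∈ G.qCenterPre T) : h ∈ G.qCenterPre T' := by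
  rw [G.mem_qCP_iff hT']
  constructor
  · intro y
    apply Set.Subset.antisymm
    · exact G.qCP_mono_half hT hT' hsub hh y
    · have hh' : G.star h ∈ G.qCenterPre T := G.star_mem_qCP hT hh
      have half := G.qCP_mono_half hT hT' hsub hh' (G.star y)
      have E := Set.image_mono (f := G.star) half
      have E' : G.sstar (G.smul (G.smul T' (G.smul (G.smul {G.star h} T') {G.star y})) T')
          ⊆ G.sstar (G.smul (G.smul T' (G.smul (G.smul {G.star y} T') {G.star h})) T') := E
      simp only [G.sstar_smul, G.sstar_closed hT', G.sstar_singleton, G.star_star,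
        G.smul_assoc] at E'
      simp only [G.smul_assoc]
      exact E'
  · intro z hz
    rcases G.mem_smul.1 hz with ⟨w, hw, h', hh', hzm⟩
    have hh'' : h' = h := hh'
    subst hh''
    rcases G.mem_smul.1 hw with ⟨hs', hhs', s', hs'T, hwm⟩
    have hhs'' : hs' = G.star h' := hhs'
    subst hhs''
    rcases (G.hmul_assoc_mem (G.star h') s' h' z).1 ⟨w, hwm, hzm⟩ with ⟨q, hq, hzq⟩
    -- q ∈ s' h ⊆ sat_T (h T s'), z ∈ h* q
    have hq1 : q ∈ G.smul (G.smul T (G.smul (G.smul {h'} T) {s'})) T := by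
      have := G.triv_embed hT s' h' hq
      rwa [← G.qCP_sat hT hh s'] at this
    have hz1 : z ∈ G.smul {G.star h'}
        (G.smul (G.smul T (G.smul (G.smul {h'} T) {s'})) T) :=
      G.mem_smul.2 ⟨G.star h', rfl, q, hq1, hzq⟩
    have e : G.smul {G.star h'} (G.smul (G.smul T (G.smul (G.smul {h'} T) {s'})) T) =
        G.smul (G.smul (G.smul {G.star h'} T) {h'}) (G.smul T (G.smul {s'} T)) := by
      simp only [G.smul_assoc]
    rw [e] at hz1
    rcases G.mem_smul.1 hz1 with ⟨a, haT, b, hbT, hab⟩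
    have haT' : a ∈ T' := hsub (G.qCP_thin_r hT hh haT)
    have hbT' : b ∈ T' := by
      apply G.smul_subset_closed hT' hsub
        (G.smul_subset_closed hT' (Set.singleton_subset_iff.2 hs'T) hsub) hbT
    exact G.hmul_subset_closed hT' haT' hbT' hab

end Mono

section UC

lemma uC_zero : G.upperCentral 0 = {G.one} := rfl

lemma uC_succ (n : ℕ) : G.upperCentral (n + 1) = G.qCenterPre (G.upperCentral n) := rfl

lemma one_closed : G.IsClosed ({G.one} : Set H) := by
  constructor
  · exact ⟨G.one, rfl⟩
  · intro z hz
    rcases G.mem_smul.1 hz with ⟨a, ha, b, hb, hab⟩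
    rcases ha with ⟨c, hc, rfl⟩
    have hc' : c = G.one := hc
    have hb' : b = G.one := hb
    subst hc'; subst hb'
    rw [G.star_one, G.one_hmul] at hab
    exact hab

lemma one_normal : ∀ x : H, G.smul ({G.one} : Set H) {x} = G.smul {x} {G.one} := by
  intro x
  rw [G.smul_singleton, G.smul_singleton, G.one_hmul, G.hmul_one]

lemma uC_closed_normal (n : ℕ) :
    G.IsClosed (G.upperCentral n) ∧
      ∀ x : H, G.smul (G.upperCentral n) {x} = G.smul {x} (G.upperCentral n) := by
  induction n with
  | zero => exact ⟨G.one_closed, G.one_normal⟩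
  | succ n ih =>
    rw [G.uC_succ]
    exact ⟨G.qCP_closed ih.1, G.qCP_normal ih.1 ih.2⟩

lemma uC_closed (n : ℕ) : G.IsClosed (G.upperCentral n) := (G.uC_closed_normal n).1

lemma uC_mono (n : ℕ) : G.upperCentral n ⊆ G.upperCentral (n + 1) := by
  rw [G.uC_succ]
  exact G.subset_qCP (G.uC_closed n)

end UC

end Hypergroup
namespace Hypergroup

variable {H : Type*} (G : Hypergroup H)

section Key

lemma inter_closed {A B : Set H} (hA : G.IsClosed A) (hB : G.IsClosed B) :
    G.IsClosed (A ∩ B) := by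
  constructor
  · exact ⟨G.one, G.one_mem_closed hA, G.one_mem_closed hB⟩
  · intro z hz
    constructor
    · exact hA.2 (G.smul_mono (Set.image_mono (f := G.star) Set.inter_subset_left)
        Set.inter_subset_left hz)
    · exact hB.2 (G.smul_mono (Set.image_mono (f := G.star) Set.inter_subset_right)
        Set.inter_subset_right hz)

lemma key_comm {F TH : Set H} (hF : G.IsClosed F) (hTH : G.IsClosed TH)
    (hN : ∀ x : H, G.smul TH {x} = G.smul {x} TH) {h y : H}
    (hhF : h ∈ F) (hyF : y ∈ F) (hq : h ∈ G.qCenterPre TH) :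
    G.smul (G.smul (TH ∩ F) (G.smul (G.smul {h} (TH ∩ F)) {y})) (TH ∩ F) =
      G.smul (G.smul (TH ∩ F) (G.smul (G.smul {y} (TH ∩ F)) {h})) (TH ∩ F) := by
  set T0 := TH ∩ F with hT0
  have hT0c : G.IsClosed T0 := G.inter_closed hTH hF
  have hsubTH : T0 ⊆ TH := Set.inter_subset_left
  have hsubF : T0 ⊆ F := Set.inter_subset_right
  have hl0 : G.smul (G.smul {h} T0) {G.star h} ⊆ T0 := by
    intro z hz
    constructor
    · exact G.qCP_thin_l hTH hq
        (G.smul_mono (G.smul_mono (le_refl _) hsubTH) (le_refl _) hz)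
    · exact G.smul_subset_closed hF
        (G.smul_subset_closed hF (Set.singleton_subset_iff.2 hhF) hsubF)
        (Set.singleton_subset_iff.2 (G.star_mem_closed hF hhF)) hz
  have hr0 : G.smul (G.smul {G.star h} T0) {h} ⊆ T0 := by
    intro z hz
    constructor
    · exact G.qCP_thin_r hTH hq
        (G.smul_mono (G.smul_mono (le_refl _) hsubTH) (le_refl _) hz)
    · exact G.smul_subset_closed hF
        (G.smul_subset_closed hF
          (Set.singleton_subset_iff.2 (G.star_mem_closed hF hhF)) hsubF)
        (Set.singleton_subset_iff.2 hhF) hz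
  rcases G.hmul_nonempty h y with ⟨u, hu⟩
  have huF : u ∈ F := G.hmul_subset_closed hF hhF hyF hu
  have hu2 : u ∈ G.smul (G.hmul y h) TH := G.qCP_push hTH hN hq y hu
  rcases G.mem_smul.1 hu2 with ⟨v, hv, t, ht, huvt⟩
  have hvF : v ∈ F := G.hmul_subset_closed hF hyF hhF hv
  have htF : t ∈ F := by
    have ht2 : t ∈ G.hmul (G.star v) u := G.inv_left v t u huvt
    exact G.hmul_subset_closed hF (G.star_mem_closed hF hvF) huF ht2
  have ht0 : t ∈ T0 := ⟨ht, htF⟩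
  have e1 : G.smul (G.smul T0 (G.smul (G.smul {h} T0) {y})) T0 = G.cls T0 u := by
    apply Set.Subset.antisymm
    · have h1 : G.smul (G.smul {h} T0) {y} ⊆ G.smul T0 {u} :=
        G.left_coset_of_thin hT0c hl0 hu
      have h2 : G.smul (G.smul T0 (G.smul (G.smul {h} T0) {y})) T0 ⊆
          G.smul (G.smul T0 (G.smul T0 {u})) T0 :=
        G.smul_mono (G.smul_mono (le_refl _) h1) (le_refl _)
      rwa [G.smul_absorb_left hT0c] at h2
    · have h1 : ({u} : Set H) ⊆ G.smul (G.smul {h} T0) {y} :=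
        Set.singleton_subset_iff.2 (G.mem_smul.2
          ⟨h, G.subset_smul_right (G.one_mem_closed hT0c) {h} rfl, y, rfl, hu⟩)
      rw [G.cls_def]
      exact G.smul_mono (G.smul_mono (le_refl _) h1) (le_refl _)
  have e2 : G.smul (G.smul T0 (G.smul (G.smul {y} T0) {h})) T0 = G.cls T0 v := by
    apply Set.Subset.antisymm
    · have h1 : G.smul (G.smul {y} T0) {h} ⊆ G.smul {v} T0 :=
        G.right_coset_of_thin hT0c hr0 hv
      have h2 : G.smul (G.smul T0 (G.smul (G.smul {y} T0) {h})) T0 ⊆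
          G.smul (G.smul T0 (G.smul {v} T0)) T0 :=
        G.smul_mono (G.smul_mono (le_refl _) h1) (le_refl _)
      have e : G.smul (G.smul T0 (G.smul {v} T0)) T0 = G.cls T0 v := by
        rw [G.cls_def]
        simp only [G.smul_assoc, G.smul_self_eq hT0c]
      rwa [e] at h2
    · have h1 : ({v} : Set H) ⊆ G.smul (G.smul {y} T0) {h} :=
        Set.singleton_subset_iff.2 (G.mem_smul.2
          ⟨y, G.subset_smul_right (G.one_mem_closed hT0c) {y} rfl, h, rfl, hv⟩)
      rw [G.cls_def]
      exact G.smul_mono (G.smul_mono (le_refl _) h1) (le_refl _)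
  have e3 : G.cls T0 u = G.cls T0 v := by
    apply G.cls_eq_of_mem hT0c
    refine G.mem_smul.2 ⟨v, ?_, t, ht0, huvt⟩
    exact G.mem_smul.2 ⟨G.one, G.one_mem_closed hT0c, v, rfl, by rw [G.one_hmul]; rfl⟩
  rw [e1, e2, e3]

end Key

end Hypergroup
section Transfer

variable {H : Type*} (G : Hypergroup H) (F : Set H)

lemma tr_smul (hF : G.IsClosed F) (GF : Hypergroup F)
    (hmul : ∀ a b : F, GF.hmul a b = {x : F | (x : H) ∈ G.hmul a b})
    (A B : Set F) :
    Subtype.val '' (GF.smul A B) =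
      G.smul (Subtype.val '' A) (Subtype.val '' B) := by
  ext z
  constructor
  · rintro ⟨x, hx, rfl⟩
    rcases GF.mem_smul.1 hx with ⟨a, ha, b, hb, hab⟩
    rw [hmul] at hab
    exact G.mem_smul.2 ⟨↑a, ⟨a, ha, rfl⟩, ↑b, ⟨b, hb, rfl⟩, hab⟩
  · intro hz
    rcases G.mem_smul.1 hz with ⟨a', ⟨a, ha, rfl⟩, b', ⟨b, hb, rfl⟩, hab⟩
    have hzF : z ∈ F := G.hmul_subset_closed hF a.2 b.2 hab
    refine ⟨⟨z, hzF⟩, GF.mem_smul.2 ⟨a, ha, b, hb, ?_⟩, rfl⟩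
    rw [hmul]
    exact hab

lemma tr_sstar (GF : Hypergroup F)
    (hstar : ∀ a : F, (GF.star a : H) = G.star a) (A : Set F) :
    Subtype.val '' (GF.sstar A) = G.sstar (Subtype.val '' A) := by
  ext z
  constructor
  · rintro ⟨x, ⟨y, hy, rfl⟩, rfl⟩
    exact ⟨↑y, ⟨y, hy, rfl⟩, (hstar y).symm⟩
  · rintro ⟨w, ⟨y, hy, rfl⟩, rfl⟩
    exact ⟨GF.star y, ⟨y, hy, rfl⟩, hstar y⟩

lemma tr_closed (hF : G.IsClosed F) (GF : Hypergroup F)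
    (hmul : ∀ a b : F, GF.hmul a b = {x : F | (x : H) ∈ G.hmul a b})
    (hstar : ∀ a : F, (GF.star a : H) = G.star a)
    {S : Set F} (hS : G.IsClosed (Subtype.val '' S)) : GF.IsClosed S := by
  constructor
  · rcases hS.1 with ⟨z, x, hx, rfl⟩
    exact ⟨x, hx⟩
  · intro z hz
    have h1 : (z : H) ∈ Subtype.val '' (GF.smul (GF.sstar S) S) := ⟨z, hz, rfl⟩
    rw [tr_smul G F hF GF hmul, tr_sstar G F GF hstar] at h1
    have h2 := hS.2 h1
    rcases h2 with ⟨x, hx, hxz⟩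
    have : x = z := Subtype.val_injective hxz
    subst this
    exact hx

end Transfer

/-- every closed subset of a weakly nilpotent hypergroup is
itself a weakly nilpotent hypergroup (w.r.t. the induced structure). -/
theorem closed_subset_weaklyNilpotent {H : Type*} (G : Hypergroup H) (F : Set H)
    (hF : G.IsClosed F) (GF : Hypergroup F)
    (hmul : ∀ a b : F, GF.hmul a b = {x : F | (x : H) ∈ G.hmul a b})
    (hone : (GF.one : H) = G.one)
    (hstar : ∀ a : F, (GF.star a : H) = G.star a)
    (hG : G.WeaklyNilpotent) :
    GF.WeaklyNilpotent := by
  have main : ∀ n : ℕ, ∀ h : F, (h : H) ∈ G.upperCentral n → h ∈ GF.upperCentral n := by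
    intro n
    induction n with
    | zero =>
      intro h hz
      have hz' : (h : H) = G.one := hz
      show h ∈ ({GF.one} : Set F)
      have : h = GF.one := Subtype.ext (by rw [hone]; exact hz')
      exact this ▸ rfl
    | succ n ih =>
      intro h hz
      have hz' : (h : H) ∈ G.qCenterPre (G.upperCentral n) := hz
      set TH := G.upperCentral n with hTHdef
      have hTH : G.IsClosed TH := G.uC_closed n
      have hN : ∀ x : H, G.smul TH {x} = G.smul {x} TH := (G.uC_closed_normal n).2
      set S0 : Set F := {x : F | (x : H) ∈ TH} with hS0def
      have imS0 : Subtype.val '' S0 = TH ∩ F := by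
        ext z
        constructor
        · rintro ⟨x, hx, rfl⟩; exact ⟨hx, x.2⟩
        · rintro ⟨h1, h2⟩; exact ⟨⟨z, h2⟩, h1, rfl⟩
      have hT0c : G.IsClosed (TH ∩ F) := G.inter_closed hTH hF
      have hS0c : GF.IsClosed S0 :=
        tr_closed G F hF GF hmul hstar (by rw [imS0]; exact hT0c)
      have hqS0 : h ∈ GF.qCenterPre S0 := by
        rw [GF.mem_qCP_iff hS0c]
        constructor
        · intro y
          apply (Set.image_eq_image Subtype.val_injective).1
          rw [tr_smul G F hF GF hmul, tr_smul G F hF GF hmul,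
            tr_smul G F hF GF hmul, tr_smul G F hF GF hmul,
            tr_smul G F hF GF hmul, tr_smul G F hF GF hmul,
            tr_smul G F hF GF hmul, tr_smul G F hF GF hmul,
            imS0, Set.image_singleton, Set.image_singleton]
          exact G.key_comm hF hTH hN h.2 y.2 hz'
        · intro z hzm
          have h1 : (z : H) ∈ Subtype.val ''
              (GF.smul (GF.smul {GF.star h} S0) {h}) := ⟨z, hzm, rfl⟩
          rw [tr_smul G F hF GF hmul, tr_smul G F hF GF hmul, imS0,
            Set.image_singleton, Set.image_singleton, hstar] at h1
          have h2 : (z : H) ∈ G.smul (G.smul {G.star (h : H)} TH) {(h : H)} :=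
            G.smul_mono (G.smul_mono (le_refl _) Set.inter_subset_left) (le_refl _) h1
          exact G.qCP_thin_r hTH hz' h2
      have hsub : S0 ⊆ GF.upperCentral n := fun x hx => ih x hx
      have := GF.qCP_mono hS0c (GF.uC_closed n) hsub hqS0
      rw [GF.uC_succ]
      exact this
  rcases hG with ⟨m, hm⟩
  refine ⟨m, Set.eq_univ_of_forall fun x => ?_⟩
  exact main m x (by rw [hm]; trivial)
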